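/- Let g_h(t) := (η̄(t) − t)/h where η̄ is the next point of the equidistant grid with step h on [0,T], and let f : [0,T] → [0,∞) be integrable. Then lim_{h→0} ∫_0^T g_h(t) f(t) dt = (1/2) ∫_0^T f(t) dt, where the limit is taken along h = T/n, n → ∞. -/

import Mathlib

open MeasureTheory intervalIntegral

noncomputable def cfun (x : ℝ) : ℝ := (⌈x⌉ : ℝ) - x

lemma cfun_mem (x : ℝ) : cfun x ∈ Set.Ico (0:ℝ) 1 := by
  have h1 := Int.le_ceil x
  have h2 := Int.ceil_lt_add_one x
  constructor <;> simp [cfun] <;> linarith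

lemma cfun_half (x : ℝ) : |cfun x - 1/2| ≤ 1/2 := by
  have h := cfun_mem x
  rw [abs_le]; exact ⟨by linarith [h.1], by linarith [h.2.le]⟩

lemma cfun_meas (h : ℝ) : Measurable fun t : ℝ => cfun (t/h) - 1/2 := by
  unfold cfun
  have h1 : Measurable fun t : ℝ => ((⌈t/h⌉ : ℤ) : ℝ) :=
    (measurable_of_countable (fun z : ℤ => (z:ℝ))).comp (measurable_id.div_const h).ceil
  exact (h1.sub (measurable_id.div_const h)).sub measurable_const

lemma cfun_intervalIntegrable (h a b : ℝ) :
    IntervalIntegrable (fun t => cfun (t/h) - 1/2) volume a b := by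
  rw [intervalIntegrable_iff]
  have : IntegrableOn (fun t : ℝ => (cfun (t/h) - 1/2) * 1) (Set.uIoc a b) volume := by
    apply Integrable.bdd_mul (c := 1/2)
    · exact integrableOn_const measure_Ioc_lt_top.ne
    · exact (cfun_meas h).aestronglyMeasurable.restrict
    · exact Filter.Eventually.of_forall fun x => by simpa [Real.norm_eq_abs] using cfun_half (x/h)
  simpa using this

lemma cfun_integral_zero (h : ℝ) (hh : 0 < h) (i : ℕ) :
    ∫ t in ((i:ℝ)*h)..(((i:ℝ)+1)*h), (cfun (t/h) - 1/2) = 0 := by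
  have hab : (i:ℝ)*h ≤ ((i:ℝ)+1)*h := by nlinarith
  have hcongr : ∫ t in ((i:ℝ)*h)..(((i:ℝ)+1)*h), (cfun (t/h) - 1/2)
      = ∫ t in ((i:ℝ)*h)..(((i:ℝ)+1)*h), (((i:ℝ)+1) - t/h - 1/2) := by
    apply intervalIntegral.integral_congr_ae
    refine Filter.Eventually.of_forall fun x hxI => ?_
    rw [Set.uIoc_of_le hab] at hxI
    have hx1 : (i:ℝ) < x/h := by
      rw [lt_div_iff₀ hh]; linarith [hxI.1]
    have hx2 : x/h ≤ (i:ℝ)+1 := by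
      rw [div_le_iff₀ hh]; linarith [hxI.2]
    have hceil : ⌈x/h⌉ = (i:ℤ)+1 := by
      rw [Int.ceil_eq_iff]; push_cast; constructor <;> linarith
    unfold cfun; rw [hceil]; push_cast; ring
  rw [hcongr]
  have h1 : IntervalIntegrable (fun t : ℝ => ((i:ℝ)+1) - 1/2) volume ((i:ℝ)*h) (((i:ℝ)+1)*h) :=
    intervalIntegrable_const
  have h2 : IntervalIntegrable (fun t : ℝ => t/h) volume ((i:ℝ)*h) (((i:ℝ)+1)*h) :=
    (continuous_id.div_const h).intervalIntegrable _ _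
  have : ∫ t in ((i:ℝ)*h)..(((i:ℝ)+1)*h), (((i:ℝ)+1) - t/h - 1/2)
      = ∫ t in ((i:ℝ)*h)..(((i:ℝ)+1)*h), ((((i:ℝ)+1) - 1/2) - t/h) := by
    congr 1; funext t; ring
  rw [this, intervalIntegral.integral_sub h1 h2, intervalIntegral.integral_const,
    intervalIntegral.integral_div, integral_id]
  field_simp
  ring

lemma mul_intervalIntegrable (h : ℝ) {a b : ℝ} {u : ℝ → ℝ}
    (hu : IntervalIntegrable u volume a b) :
    IntervalIntegrable (fun t => (cfun (t/h) - 1/2) * u t) volume a b := by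
  rw [intervalIntegrable_iff] at hu ⊢
  exact hu.bdd_mul (cfun_meas h).aestronglyMeasurable.restrict
    (c := 1/2) (Filter.Eventually.of_forall fun x => by simpa [Real.norm_eq_abs] using cfun_half (x/h))

lemma cont_tendsto (T : ℝ) (hT : 0 < T) (g : ℝ → ℝ) (hg : Continuous g) :
    Filter.Tendsto (fun n : ℕ => ∫ t in (0:ℝ)..T, (cfun (t/(T/(n:ℝ))) - 1/2) * g t)
      Filter.atTop (nhds 0) := by
  rw [Metric.tendsto_atTop]
  intro ε hε
  have uc := (isCompact_Icc (a := (0:ℝ)) (b := T)).uniformContinuousOn_of_continuous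
    hg.continuousOn
  rw [Metric.uniformContinuousOn_iff] at uc
  set ε' : ℝ := ε / (2*T) with hε'def
  have hε' : 0 < ε' := by positivity
  obtain ⟨δ, hδ, hucδ⟩ := uc ε' hε'
  obtain ⟨N₀, hN₀⟩ := exists_nat_gt (T/δ)
  refine ⟨max N₀ 1, fun n hn => ?_⟩
  have hn1 : 1 ≤ n := le_trans (le_max_right N₀ 1) hn
  have hnpos : (0:ℝ) < n := by exact_mod_cast hn1
  set h : ℝ := T / n with hdef
  have hh : 0 < h := by positivity
  have hhδ : h < δ := by
    rw [hdef, div_lt_iff₀ hnpos]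
    have : T/δ < (n:ℝ) := lt_of_lt_of_le (by exact_mod_cast hN₀)
      (by exact_mod_cast le_trans (le_max_left N₀ 1) hn)
    calc T = (T/δ)*δ := by field_simp
    _ < (n:ℝ)*δ := by apply mul_lt_mul_of_pos_right this hδ
    _ = δ * n := by ring
  have hnh : (n:ℝ) * h = T := by rw [hdef]; field_simp
  -- sum decomposition
  have hint : ∀ k < n, IntervalIntegrable (fun t => (cfun (t/h) - 1/2) * g t) volume
      ((k:ℝ)*h) ((k:ℝ)*h + h) := fun k _ =>
    mul_intervalIntegrable h (hg.intervalIntegrable _ _)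
  have hsum := intervalIntegral.sum_integral_adjacent_intervals
    (a := fun i : ℕ => (i:ℝ)*h) (f := fun t => (cfun (t/h) - 1/2) * g t)
    (μ := volume) (n := n) (fun k hk => by
      have e : ((k+1:ℕ):ℝ)*h = (k:ℝ)*h + h := by push_cast; ring
      simpa only [e] using hint k hk)
  push_cast at hsum
  rw [zero_mul, hnh] at hsum
  have key : ∀ i ∈ Finset.range n,
      ‖∫ t in ((i:ℝ)*h)..(((i:ℝ)+1)*h), (cfun (t/h) - 1/2) * g t‖ ≤ (1/2*ε') * h := by
    intro i hi
    rw [Finset.mem_range] at hi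
    have hab : (i:ℝ)*h ≤ ((i:ℝ)+1)*h := by nlinarith
    have hsplit : (∫ t in ((i:ℝ)*h)..(((i:ℝ)+1)*h), (cfun (t/h) - 1/2) * g t)
        = ∫ t in ((i:ℝ)*h)..(((i:ℝ)+1)*h), (cfun (t/h) - 1/2) * (g t - g ((i:ℝ)*h)) := by
      have e : ∀ t : ℝ, (cfun (t/h) - 1/2) * g t
          = (cfun (t/h) - 1/2) * (g t - g ((i:ℝ)*h)) + g ((i:ℝ)*h) * (cfun (t/h) - 1/2) := by
        intro t; ring
      simp_rw [e]
      rw [intervalIntegral.integral_add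
        (mul_intervalIntegrable h (u := fun t => g t - g ((i:ℝ)*h)) ((hg.sub continuous_const).intervalIntegrable _ _))
        ((cfun_intervalIntegrable h _ _).const_mul _),
        intervalIntegral.integral_const_mul, cfun_integral_zero h hh i]
      ring
    rw [hsplit]
    have hb : ∀ x ∈ Set.uIoc ((i:ℝ)*h) (((i:ℝ)+1)*h),
        ‖(cfun (x/h) - 1/2) * (g x - g ((i:ℝ)*h))‖ ≤ 1/2*ε' := by
      intro x hx
      rw [Set.uIoc_of_le hab] at hx
      have hxIcc : x ∈ Set.Icc (0:ℝ) T := by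
        constructor
        · have : (0:ℝ) ≤ (i:ℝ)*h := by positivity
          linarith [hx.1]
        · have : ((i:ℝ)+1)*h ≤ T := by
            rw [← hnh]
            have : (i:ℝ)+1 ≤ (n:ℝ) := by exact_mod_cast hi
            nlinarith
          linarith [hx.2]
      have haIcc : (i:ℝ)*h ∈ Set.Icc (0:ℝ) T := by
        constructor
        · positivity
        · rw [← hnh]
          have : (i:ℝ) ≤ (n:ℝ) := by exact_mod_cast hi.le
          nlinarith
      have hdist : dist x ((i:ℝ)*h) < δ := by
        rw [Real.dist_eq, abs_lt]
        constructor <;> [linarith [hx.1, hh]; linarith [hx.2, hhδ]]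
      have := hucδ x hxIcc ((i:ℝ)*h) haIcc hdist
      rw [Real.dist_eq] at this
      rw [Real.norm_eq_abs, abs_mul]
      have h1 := cfun_half (x/h)
      have h2 : |g x - g ((i:ℝ)*h)| ≤ ε' := this.le
      calc |cfun (x/h) - 1/2| * |g x - g ((i:ℝ)*h)| ≤ (1/2) * ε' := by
            apply mul_le_mul h1 h2 (abs_nonneg _) (by norm_num)
      _ = 1/2*ε' := by ring
    have := intervalIntegral.norm_integral_le_of_norm_le_const hb
    calc ‖∫ t in ((i:ℝ)*h)..(((i:ℝ)+1)*h), (cfun (t/h) - 1/2) * (g t - g ((i:ℝ)*h))‖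
        ≤ 1/2*ε' * |((i:ℝ)+1)*h - (i:ℝ)*h| := this
    _ = 1/2*ε' * h := by rw [show ((i:ℝ)+1)*h - (i:ℝ)*h = h by ring, abs_of_pos hh]
  rw [Real.dist_eq, sub_zero, ← hsum]
  calc |∑ i ∈ Finset.range n, ∫ t in ((i:ℝ)*h)..(((i:ℝ)+1)*h), (cfun (t/h) - 1/2) * g t|
      ≤ ∑ i ∈ Finset.range n, ‖∫ t in ((i:ℝ)*h)..(((i:ℝ)+1)*h), (cfun (t/h) - 1/2) * g t‖ := by
        exact Finset.abs_sum_le_sum_abs _ _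
  _ ≤ ∑ _i ∈ Finset.range n, (1/2*ε') * h := Finset.sum_le_sum key
  _ = (n:ℝ) * ((1/2*ε') * h) := by rw [Finset.sum_const, Finset.card_range, nsmul_eq_mul]
  _ = (1/2*ε') * ((n:ℝ) * h) := by ring
  _ = (1/2*ε') * T := by rw [hnh]
  _ = ε/4 := by rw [hε'def]; field_simp; ring
  _ < ε := by linarith

lemma main_tendsto (T : ℝ) (hT : 0 < T) (f : ℝ → ℝ)
    (hf : IntegrableOn f (Set.Icc 0 T)) :
    Filter.Tendsto (fun n : ℕ => ∫ t in (0:ℝ)..T, (cfun (t/(T/(n:ℝ))) - 1/2) * f t)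
      Filter.atTop (nhds 0) := by
  rw [Metric.tendsto_atTop]
  intro ε hε
  set f' : ℝ → ℝ := (Set.Icc 0 T).indicator f with hf'def
  have hf'int : Integrable f' volume := hf.integrable_indicator measurableSet_Icc
  obtain ⟨g, hgsupp, hgapprox, hgcont, hgint⟩ :=
    hf'int.exists_hasCompactSupport_integral_sub_le (ε := ε/2) (by positivity)
  have hfI : IntervalIntegrable f volume 0 T := by
    rw [intervalIntegrable_iff]
    exact hf.mono_set (by rw [Set.uIoc_of_le hT.le]; exact Set.Ioc_subset_Icc_self)
  have hDg := cont_tendsto T hT g hgcont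
  rw [Metric.tendsto_atTop] at hDg
  obtain ⟨N, hN⟩ := hDg (ε/4) (by positivity)
  refine ⟨N, fun n hn => ?_⟩
  have hDgn := hN n hn
  rw [Real.dist_eq, sub_zero] at hDgn ⊢
  set h : ℝ := T / (n:ℝ) with hdef
  -- difference bound
  have hfg : IntervalIntegrable (fun t => f t - g t) volume 0 T :=
    hfI.sub (hgcont.intervalIntegrable _ _)
  have hsub : (∫ t in (0:ℝ)..T, (cfun (t/h) - 1/2) * f t)
      - (∫ t in (0:ℝ)..T, (cfun (t/h) - 1/2) * g t)
      = ∫ t in (0:ℝ)..T, (cfun (t/h) - 1/2) * (f t - g t) := by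
    rw [← intervalIntegral.integral_sub (mul_intervalIntegrable h hfI)
      (mul_intervalIntegrable h (hgcont.intervalIntegrable _ _))]
    congr 1; funext t; ring
  have hbound : |∫ t in (0:ℝ)..T, (cfun (t/h) - 1/2) * (f t - g t)| ≤ ε/4 := by
    have h1 : |∫ t in (0:ℝ)..T, (cfun (t/h) - 1/2) * (f t - g t)|
        ≤ ∫ t in (0:ℝ)..T, ‖(cfun (t/h) - 1/2) * (f t - g t)‖ := by
      rw [← Real.norm_eq_abs]
      exact intervalIntegral.norm_integral_le_integral_norm hT.le
    have h2 : (∫ t in (0:ℝ)..T, ‖(cfun (t/h) - 1/2) * (f t - g t)‖)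
        ≤ ∫ t in (0:ℝ)..T, (1/2) * ‖f t - g t‖ := by
      apply intervalIntegral.integral_mono_on hT.le
      · exact (mul_intervalIntegrable h hfg).norm
      · exact (hfg.norm.const_mul _)
      · intro x _
        rw [Real.norm_eq_abs, Real.norm_eq_abs, abs_mul]
        exact mul_le_mul_of_nonneg_right (cfun_half _) (abs_nonneg _)
    have h3 : (∫ t in (0:ℝ)..T, (1/2) * ‖f t - g t‖)
        = (1/2) * ∫ t in (0:ℝ)..T, ‖f t - g t‖ :=
      intervalIntegral.integral_const_mul _ _
    have h4 : (∫ t in (0:ℝ)..T, ‖f t - g t‖) ≤ ε/2 := by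
      rw [intervalIntegral.integral_of_le hT.le]
      have e1 : (∫ t in Set.Ioc (0:ℝ) T, ‖f t - g t‖)
          = ∫ t in Set.Ioc (0:ℝ) T, ‖f' t - g t‖ := by
        apply setIntegral_congr_fun measurableSet_Ioc
        intro x hx
        simp [hf'def, Set.indicator_of_mem (Set.Ioc_subset_Icc_self hx)]
      rw [e1]
      calc (∫ t in Set.Ioc (0:ℝ) T, ‖f' t - g t‖) ≤ ∫ t, ‖f' t - g t‖ := by
            apply setIntegral_le_integral (hf'int.sub hgint).norm
            exact Filter.Eventually.of_forall fun x => norm_nonneg _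
      _ ≤ ε/2 := hgapprox
    calc |∫ t in (0:ℝ)..T, (cfun (t/h) - 1/2) * (f t - g t)| ≤ (1/2) * ∫ t in (0:ℝ)..T, ‖f t - g t‖ := by
          rw [← h3]; exact h1.trans h2
    _ ≤ (1/2) * (ε/2) := by linarith
    _ = ε/4 := by ring
  set A := ∫ t in (0:ℝ)..T, (cfun (t/h) - 1/2) * f t with hA
  set B := ∫ t in (0:ℝ)..T, (cfun (t/h) - 1/2) * g t with hB
  have habs : |A| ≤ |A - B| + |B| := by
    calc |A| = |(A - B) + B| := by ring_nf
    _ ≤ |A - B| + |B| := abs_add_le _ _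
  have hAB : |A - B| ≤ ε/4 := by rw [hsub]; exact hbound
  calc |A| ≤ |A - B| + |B| := habs
  _ < ε/4 + ε/4 := by exact add_lt_add_of_le_of_lt hAB hDgn
  _ < ε := by linarith

/-- Riemann–Lebesgue-type lemma: with `g_h(t) = (η̄(t) − t)/h` for the equidistant grid
with step `h = T/n`, and `f ≥ 0` integrable on `[0,T]`,
`∫_0^T g_h(t) f(t) dt → (1/2)∫_0^T f(t) dt` as `n → ∞`. -/
theorem stmt13 (T : ℝ) (hT : 0 < T) (f : ℝ → ℝ)
    (hf : IntegrableOn f (Set.Icc 0 T))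
    (hfnn : ∀ t ∈ Set.Icc (0:ℝ) T, 0 ≤ f t) :
    Filter.Tendsto (fun n : ℕ =>
      ∫ t in (0:ℝ)..T, ((T / (n:ℝ) * (⌈t / (T / (n:ℝ))⌉ : ℝ) - t) / (T / (n:ℝ))) * f t)
      Filter.atTop (nhds ((1 / 2) * ∫ t in (0:ℝ)..T, f t)) := by
  have hfI : IntervalIntegrable f volume 0 T := by
    rw [intervalIntegrable_iff]
    exact hf.mono_set (by rw [Set.uIoc_of_le hT.le]; exact Set.Ioc_subset_Icc_self)
  have hD := main_tendsto T hT f hf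
  have hlim := hD.add (tendsto_const_nhds
    (x := (1 / 2) * ∫ t in (0:ℝ)..T, f t) (f := Filter.atTop (α := ℕ)))
  rw [zero_add] at hlim
  apply hlim.congr'
  filter_upwards [Filter.eventually_ge_atTop 1] with n hn
  have hnpos : (0:ℝ) < n := by exact_mod_cast hn
  set h : ℝ := T / (n:ℝ) with hdef
  have hh : 0 < h := by rw [hdef]; positivity
  have hptwise : ∀ t : ℝ, ((h * (⌈t / h⌉ : ℝ) - t) / h) * f t
      = (cfun (t/h) - 1/2) * f t + (1/2) * f t := by
    intro t
    have : (h * (⌈t / h⌉ : ℝ) - t) / h = cfun (t/h) := by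
      unfold cfun
      field_simp
    rw [this]; ring
  have heq : (∫ t in (0:ℝ)..T, ((h * (⌈t / h⌉ : ℝ) - t) / h) * f t)
      = (∫ t in (0:ℝ)..T, (cfun (t/h) - 1/2) * f t)
        + ∫ t in (0:ℝ)..T, (1/2) * f t := by
    rw [← intervalIntegral.integral_add (mul_intervalIntegrable h hfI)
      (hfI.const_mul _)]
    congr 1; funext t; exact hptwise t
  rw [heq, intervalIntegral.integral_const_mul]
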